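/- Let 𝓕 be the space of Lipschitz functions on [0,1] with norm ‖f‖ = max{‖f‖_∞, Lip(f)}, where Lip(f) is the Lipschitz constant. Fix n ∈ ℕ and n sample points x₁,…,xₙ ∈ [0,1]. Then there exist f, g in the unit ball of 𝓕 with f(xᵢ) = g(xᵢ) for all i, f(0)=g(0)=0, f(1)=g(1), both non-decreasing, and ‖f − g‖_∞ ≥ 1/(4n). -/

import Mathlib

lemma min_inc_bounds (c s t : ℝ) (hst : s ≤ t) :
    0 ≤ min t c - min s c ∧ min t c - min s c ≤ t - s := by
  constructor <;> · simp only [min_def]; split_ifs <;> linarith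

lemma min_inc_mono (c d s t : ℝ) (hcd : c ≤ d) (hst : s ≤ t) :
    min t c - min s c ≤ min t d - min s d := by
  simp only [min_def]
  split_ifs <;> linarith

/-- For any `n` sample points in `[0,1]` there exist two non-decreasing
functions in the unit ball of the Lipschitz space on `[0,1]` that agree at all
sample points, vanish at `0`, agree at `1`, and differ by at least `1/(4n)` in
the sup-norm. -/
theorem lipschitz_fooling_pair
    (n : ℕ) (hn : 0 < n) (x : Fin n → ℝ) (hx : ∀ i, x i ∈ Set.Icc (0:ℝ) 1) :
    ∃ f g : ℝ → ℝ,
      LipschitzOnWith 1 f (Set.Icc 0 1) ∧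
      LipschitzOnWith 1 g (Set.Icc 0 1) ∧
      (∀ y ∈ Set.Icc (0:ℝ) 1, |f y| ≤ 1) ∧
      (∀ y ∈ Set.Icc (0:ℝ) 1, |g y| ≤ 1) ∧
      MonotoneOn f (Set.Icc 0 1) ∧
      MonotoneOn g (Set.Icc 0 1) ∧
      (∀ i, f (x i) = g (x i)) ∧
      f 0 = 0 ∧ g 0 = 0 ∧ f 1 = g 1 ∧
      ∃ z ∈ Set.Icc (0:ℝ) 1, 1 / (4 * n) ≤ |f z - g z| := by
  classical
  -- pigeonhole: some half-open interval [k/(2n), (k+1)/(2n)) contains no sample point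
  obtain ⟨k', hk'⟩ : ∃ k : Fin (2*n), ∀ i,
      (⟨min (⌊2*(n:ℝ)*x i⌋₊) (2*n-1), by
        have := min_le_right (⌊2*(n:ℝ)*x i⌋₊) (2*n-1); omega⟩ : Fin (2*n)) ≠ k := by
    by_contra h
    push_neg at h
    have hsurj : Function.Surjective
        (fun i => (⟨min (⌊2*(n:ℝ)*x i⌋₊) (2*n-1), by
          have := min_le_right (⌊2*(n:ℝ)*x i⌋₊) (2*n-1); omega⟩ : Fin (2*n))) := by
      intro k; obtain ⟨i, hi⟩ := h k; exact ⟨i, hi⟩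
    have := Fintype.card_le_of_surjective _ hsurj
    simp only [Fintype.card_fin] at this
    omega
  set k : ℕ := (k' : ℕ) with hkdef
  have hk2n : k < 2*n := k'.isLt
  have hN : (0:ℝ) < n := by exact_mod_cast hn
  set a : ℝ := k / (2*n) with hadef
  set m : ℝ := a + 1/(4*n) with hmdef
  set b : ℝ := a + 1/(2*n) with hbdef
  have ha0 : 0 ≤ a := by positivity
  have ham : a < m := by
    have : (0:ℝ) < 1/(4*n) := by positivity
    rw [hmdef]; linarith
  have hmb : m < b := by
    rw [hmdef, hbdef]
    have : (1:ℝ)/(4*n) < 1/(2*n) := by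
      apply div_lt_div_of_pos_left one_pos (by positivity); linarith
    linarith
  have hb1 : b ≤ 1 := by
    rw [hbdef, hadef, ← add_div, div_le_one (by positivity)]
    have h : (k+1 : ℕ) ≤ 2*n := hk2n
    exact_mod_cast h
  -- the interval [a,b) is free of sample points
  have hfree : ∀ i, x i < a ∨ b ≤ x i := by
    intro i
    by_contra h
    push_neg at h
    obtain ⟨h1, h2⟩ := h
    have hxi := hx i
    have hx0 : 0 ≤ x i := hxi.1
    have hfl : ⌊2*(n:ℝ)*x i⌋₊ = k := by
      rw [Nat.floor_eq_iff (by positivity)]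
      constructor
      · rw [hadef, div_le_iff₀ (by positivity)] at h1
        linarith
      · rw [hbdef, hadef, ← add_div] at h2
        rw [lt_div_iff₀ (by positivity)] at h2
        push_cast at h2 ⊢
        linarith
    apply hk' i
    apply Fin.ext
    simp only [hfl]
    have : k ≤ 2*n - 1 := by omega
    exact (min_eq_left this).trans hkdef
  -- the tent function and the two functions
  set T : ℝ → ℝ := fun t => 2 * min t m - min t a - min t b with hTdef
  clear_value T
  have Tlip : ∀ s t : ℝ, s ≤ t → |T t - T s| ≤ t - s := by
    intro s t hst
    have da := min_inc_bounds a s t hst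
    have dm := min_inc_bounds m s t hst
    have db := min_inc_bounds b s t hst
    have o1 := min_inc_mono a m s t ham.le hst
    have o2 := min_inc_mono m b s t hmb.le hst
    rw [abs_le]
    constructor <;> · simp only [hTdef]; linarith [da.1, da.2, dm.1, dm.2, db.1, db.2]
  have Tle : ∀ t, t ≤ a → T t = 0 := by
    intro t ht
    have h1 : min t m = t := min_eq_left (by linarith)
    have h2 : min t a = t := min_eq_left ht
    have h3 : min t b = t := min_eq_left (by linarith)
    simp only [hTdef, h1, h2, h3]; ring
  have Tge : ∀ t, b ≤ t → T t = 0 := by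
    intro t ht
    have h1 : min t m = m := min_eq_right (by linarith)
    have h2 : min t a = a := min_eq_right (by linarith)
    have h3 : min t b = b := min_eq_right ht
    simp only [hTdef, h1, h2, h3]; simp only [hmdef, hbdef]; ring
  have Tm : T m = 1/(4*n) := by
    have h1 : min m m = m := min_self m
    have h2 : min m a = a := min_eq_right ham.le
    have h3 : min m b = m := min_eq_left hmb.le
    simp only [hTdef, h1, h2, h3]; simp only [hmdef]; ring
  set f : ℝ → ℝ := fun t => (t - T t)/2 with hfdef
  set g : ℝ → ℝ := fun t => (t + T t)/2 with hgdef
  clear_value f g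
  have monof : ∀ s t : ℝ, s ≤ t → f s ≤ f t := by
    intro s t h
    have := Tlip s t h
    rw [abs_le] at this
    simp only [hfdef]
    linarith [this.1, this.2]
  have monog : ∀ s t : ℝ, s ≤ t → g s ≤ g t := by
    intro s t h
    have := Tlip s t h
    rw [abs_le] at this
    simp only [hgdef]
    linarith [this.1, this.2]
  have lipf : ∀ s t : ℝ, s ≤ t → f t - f s ≤ t - s := by
    intro s t h
    have := Tlip s t h
    rw [abs_le] at this
    simp only [hfdef]
    linarith [this.1, this.2]
  have lipg : ∀ s t : ℝ, s ≤ t → g t - g s ≤ t - s := by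
    intro s t h
    have := Tlip s t h
    rw [abs_le] at this
    simp only [hgdef]
    linarith [this.1, this.2]
  have hT0 : T 0 = 0 := Tle 0 ha0
  have hT1 : T 1 = 0 := Tge 1 hb1
  have hf0 : f 0 = 0 := by simp [hfdef, hT0]
  have hg0 : g 0 = 0 := by simp [hgdef, hT0]
  have hf1 : f 1 = 1/2 := by simp [hfdef, hT1]
  have hg1 : g 1 = 1/2 := by simp [hgdef, hT1]
  have lipOn : ∀ h : ℝ → ℝ, (∀ s t : ℝ, s ≤ t → h s ≤ h t) →
      (∀ s t : ℝ, s ≤ t → h t - h s ≤ t - s) → LipschitzOnWith 1 h (Set.Icc 0 1) := by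
    intro h hm hl
    rw [lipschitzOnWith_iff_dist_le_mul]
    intro s hs t ht
    rw [Real.dist_eq, Real.dist_eq]
    simp only [NNReal.coe_one, one_mul]
    rcases le_total s t with hst | hst
    · rw [abs_of_nonpos (by linarith [hm s t hst]), abs_of_nonpos (by linarith)]
      linarith [hl s t hst]
    · rw [abs_of_nonneg (by linarith [hm t s hst]), abs_of_nonneg (by linarith)]
      linarith [hl t s hst]
  refine ⟨f, g, lipOn f monof lipf, lipOn g monog lipg, ?_, ?_, ?_, ?_, ?_, hf0, hg0, ?_, ?_⟩
  · intro y hy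
    rw [abs_le]
    constructor
    · linarith [monof 0 y hy.1, hf0]
    · linarith [monof y 1 hy.2, hf1]
  · intro y hy
    rw [abs_le]
    constructor
    · linarith [monog 0 y hy.1, hg0]
    · linarith [monog y 1 hy.2, hg1]
  · intro s hs t ht hst
    exact monof s t hst
  · intro s hs t ht hst
    exact monog s t hst
  · intro i
    have hTz : T (x i) = 0 := by
      rcases hfree i with h | h
      · exact Tle _ h.le
      · exact Tge _ h
    simp [hfdef, hgdef, hTz]
  · simp [hfdef, hgdef, hT1]
  · refine ⟨m, ⟨by linarith, by linarith⟩, ?_⟩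
    have : f m - g m = -(T m) := by simp only [hfdef, hgdef]; ring
    rw [this, abs_neg, Tm, abs_of_nonneg (by positivity)]
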